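/- arXiv:1601.00083 — 7 statements merged into one kernel-verified Lean document; each statement's English description precedes it below -/
import Mathlib

section
/- Define A(x) = 8(π-2)²(π³-60π+120)x⁸ - 6(π-2)(π⁶-100π⁴+200π³-480(π-2)²)x⁶ + 3π³(π⁶-720(π-2)²)x⁴ + 540π⁶(π-2)x² - 45π⁹. Then A(x) < 0 for all x in (0, c], where c = -((π³-60(π-2))π³)/(240(π³-24(π-2))). -/
open Real

set_option maxHeartbeats 1000000

theorem A_neg (x : ℝ) (hx : 0 < x)
    (hx' : x ≤ -((π ^ 3 - 60 * (π - 2)) * π ^ 3) / (240 * (π ^ 3 - 24 * (π - 2)))) :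
    8 * (π - 2) ^ 2 * (π ^ 3 - 60 * π + 120) * x ^ 8 -
        6 * (π - 2) * (π ^ 6 - 100 * π ^ 4 + 200 * π ^ 3 - 480 * (π - 2) ^ 2) * x ^ 6 +
        3 * π ^ 3 * (π ^ 6 - 720 * (π - 2) ^ 2) * x ^ 4 +
        540 * π ^ 6 * (π - 2) * x ^ 2 - 45 * π ^ 9 < 0 := by
  have hπl : 3.141592 < π := Real.pi_gt_d6
  have hπu : π < 3.141593 := Real.pi_lt_d6
  have h2l : (9.8696 : ℝ) < π ^ 2 := by nlinarith
  have h2u : π ^ 2 < 9.86961 := by nlinarith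
  have h3l : (31.00624 : ℝ) < π ^ 3 := by nlinarith
  have h3u : π ^ 3 < 31.00631 := by nlinarith
  have h4l : (97.4088 : ℝ) < π ^ 4 := by nlinarith
  have h4u : π ^ 4 < 97.4093 := by nlinarith
  have h6l : (961.386 : ℝ) < π ^ 6 := by nlinarith [sq_nonneg (π ^ 3 - 31.00624)]
  have h6u : π ^ 6 < 961.392 := by nlinarith [sq_nonneg (π ^ 3 - 31.00631)]
  have h9l : (29808 : ℝ) < π ^ 9 := by nlinarith
  -- bound x ≤ 1.3428
  have hD : (0:ℝ) < 240 * (π ^ 3 - 24 * (π - 2)) := by nlinarith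
  have hxD : x * (240 * (π ^ 3 - 24 * (π - 2))) ≤
      -((π ^ 3 - 60 * (π - 2)) * π ^ 3) := (le_div_iff₀ hD).mp hx'
  have hN : -((π ^ 3 - 60 * (π - 2)) * π ^ 3) ≤
      1.3428 * (240 * (π ^ 3 - 24 * (π - 2))) := by nlinarith
  have hb : x ≤ 1.3428 := by nlinarith
  have hx2 : x ^ 2 ≤ 1.80312 := by nlinarith
  have hx4 : x ^ 4 ≤ 3.25125 := by nlinarith [sq_nonneg x, sq_nonneg (x^2 - 1.80312)]
  have hx6 : x ^ 6 ≤ 5.8625 := by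
    have h : (x ^ 2) ^ 3 ≤ (1.80312 : ℝ) ^ 3 := pow_le_pow_left₀ (sq_nonneg x) hx2 3
    calc x ^ 6 = (x ^ 2) ^ 3 := by ring
      _ ≤ (1.80312 : ℝ) ^ 3 := h
      _ ≤ 5.8625 := by norm_num
  -- term bounds
  have h60 : π ^ 3 - 60 * π + 120 < 0 := by nlinarith
  have t8 : 8 * (π - 2) ^ 2 * (π ^ 3 - 60 * π + 120) * x ^ 8 ≤ 0 := by
    have h1 : 8 * (π - 2) ^ 2 * (π ^ 3 - 60 * π + 120) * x ^ 8 =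
        (8 * (π - 2) ^ 2 * x ^ 8) * (π ^ 3 - 60 * π + 120) := by ring
    rw [h1]
    exact mul_nonpos_of_nonneg_of_nonpos (by positivity) h60.le
  have hc6 : -(6 * (π - 2) * (π ^ 6 - 100 * π ^ 4 + 200 * π ^ 3 - 480 * (π - 2) ^ 2)) ≤ 21960 := by
    nlinarith [h2l, h2u, h3l, h3u, h4l, h4u, h6l, h6u, hπl, hπu]
  have hc6l : (0:ℝ) ≤ -(6 * (π - 2) * (π ^ 6 - 100 * π ^ 4 + 200 * π ^ 3 - 480 * (π - 2) ^ 2)) := by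
    nlinarith [h2l, h2u, h3l, h3u, h4l, h4u, h6l, h6u, hπl, hπu]
  have t6 : -(6 * (π - 2) * (π ^ 6 - 100 * π ^ 4 + 200 * π ^ 3 - 480 * (π - 2) ^ 2)) * x ^ 6
      ≤ 128800 := by
    have h := mul_le_mul hc6 hx6 (pow_nonneg hx.le 6) (by norm_num : (0:ℝ) ≤ 21960)
    calc -(6 * (π - 2) * (π ^ 6 - 100 * π ^ 4 + 200 * π ^ 3 - 480 * (π - 2) ^ 2)) * x ^ 6
        ≤ 21960 * 5.8625 := h
      _ ≤ 128800 := by norm_num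
  have hI4u : π ^ 6 - 720 * (π - 2) ^ 2 < 23.07 := by nlinarith
  have hI4l : (0:ℝ) < π ^ 6 - 720 * (π - 2) ^ 2 := by nlinarith
  have hc4 : 3 * π ^ 3 * (π ^ 6 - 720 * (π - 2) ^ 2) ≤ 2150 := by
    nlinarith [hI4u, hI4l, h3l, h3u]
  have hc4l : (0:ℝ) ≤ 3 * π ^ 3 * (π ^ 6 - 720 * (π - 2) ^ 2) := by
    nlinarith [hI4l, h3l]
  have t4 : 3 * π ^ 3 * (π ^ 6 - 720 * (π - 2) ^ 2) * x ^ 4 ≤ 7000 := by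
    have h := mul_le_mul hc4 hx4 (pow_nonneg hx.le 4) (by norm_num : (0:ℝ) ≤ 2150)
    calc 3 * π ^ 3 * (π ^ 6 - 720 * (π - 2) ^ 2) * x ^ 4 ≤ 2150 * 3.25125 := h
      _ ≤ 7000 := by norm_num
  have hc2 : 540 * π ^ 6 * (π - 2) ≤ 592700 := by
    nlinarith [h6l, h6u, hπl, hπu]
  have hc2l : (0:ℝ) ≤ 540 * π ^ 6 * (π - 2) := by nlinarith [h6l, hπl]
  have t2 : 540 * π ^ 6 * (π - 2) * x ^ 2 ≤ 1068800 := by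
    have h := mul_le_mul hc2 hx2 (sq_nonneg x) (by norm_num : (0:ℝ) ≤ 592700)
    calc 540 * π ^ 6 * (π - 2) * x ^ 2 ≤ 592700 * 1.80312 := h
      _ ≤ 1068800 := by norm_num
  linarith [t8, t6, t4, t2, h9l]
end

section
/- Define A(x) = 8(π-2)²(π³-60π+120)x⁸ - 6(π-2)(π⁶-100π⁴+200π³-480(π-2)²)x⁶ + 3π³(π⁶-720(π-2)²)x⁴ + 540π⁶(π-2)x² - 45π⁹ and B(x) = 90x³(π³-4(π-2)x²)³. Then g₁(x) := 2A(x)·sin³x + B(x)·cos x > 0 for all x in (0, c], where c = -((π³-60(π-2))π³)/(240(π³-24(π-2))). -/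
open Real

private lemma mono0 {f f' : ℝ → ℝ} (hd : ∀ y, HasDerivAt f (f' y) y)
    (h0 : ∀ y, 0 ≤ y → 0 ≤ f' y) (hf0 : f 0 = 0) {x : ℝ} (hx : 0 ≤ x) : 0 ≤ f x := by
  have hmono : MonotoneOn f (Set.Ici 0) := by
    apply monotoneOn_of_deriv_nonneg (convex_Ici 0)
    · exact fun y _ => (hd y).continuousAt.continuousWithinAt
    · exact fun y _ => (hd y).differentiableAt.differentiableWithinAt
    · intro y hy
      rw [interior_Ici] at hy
      rw [(hd y).deriv]
      exact h0 y (le_of_lt hy)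
  have h := hmono Set.self_mem_Ici (Set.mem_Ici.mpr hx) hx
  rwa [hf0] at h

private lemma sin_lb (x : ℝ) (hx : 0 ≤ x) : x - x ^ 3 / 6 ≤ Real.sin x := by
  have hd : ∀ y : ℝ, HasDerivAt (fun y => Real.sin y - y + y ^ 3 / 6)
      (Real.cos y - 1 + y ^ 2 / 2) y := by
    intro y
    have h1 : HasDerivAt (fun y : ℝ => y ^ 3 / 6) (y ^ 2 / 2) y := by
      have h := (hasDerivAt_pow 3 y).div_const 6
      refine h.congr_deriv ?_
      norm_num
      ring
    exact ((Real.hasDerivAt_sin y).sub (hasDerivAt_id y)).add h1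
  have h0 : ∀ y : ℝ, 0 ≤ y → 0 ≤ Real.cos y - 1 + y ^ 2 / 2 := fun y _ => by
    nlinarith [Real.one_sub_sq_div_two_le_cos (x := y)]
  have h := mono0 hd h0 (by norm_num) hx
  beta_reduce at h
  linarith

private lemma cos_ub (x : ℝ) (hx : 0 ≤ x) : Real.cos x ≤ 1 - x ^ 2 / 2 + x ^ 4 / 24 := by
  have hd : ∀ y : ℝ, HasDerivAt (fun y => 1 - y ^ 2 / 2 + y ^ 4 / 24 - Real.cos y)
      (Real.sin y - y + y ^ 3 / 6) y := by
    intro y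
    have h := (((hasDerivAt_const y (1 : ℝ)).sub ((hasDerivAt_pow 2 y).div_const 2)).add
      ((hasDerivAt_pow 4 y).div_const 24)).sub (Real.hasDerivAt_cos y)
    refine h.congr_deriv ?_
    norm_num
    ring
  have h0 : ∀ y : ℝ, 0 ≤ y → 0 ≤ Real.sin y - y + y ^ 3 / 6 := fun y hy => by
    have := sin_lb y hy; linarith
  have h := mono0 hd h0 (by norm_num) hx
  beta_reduce at h
  linarith

private lemma sin_ub (x : ℝ) (hx : 0 ≤ x) : Real.sin x ≤ x - x ^ 3 / 6 + x ^ 5 / 120 := by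
  have hd : ∀ y : ℝ, HasDerivAt (fun y => y - y ^ 3 / 6 + y ^ 5 / 120 - Real.sin y)
      (1 - y ^ 2 / 2 + y ^ 4 / 24 - Real.cos y) y := by
    intro y
    have h := (((hasDerivAt_id y).sub ((hasDerivAt_pow 3 y).div_const 6)).add
      ((hasDerivAt_pow 5 y).div_const 120)).sub (Real.hasDerivAt_sin y)
    refine h.congr_deriv ?_
    norm_num
    ring
  have h0 : ∀ y : ℝ, 0 ≤ y → 0 ≤ 1 - y ^ 2 / 2 + y ^ 4 / 24 - Real.cos y := fun y hy => by
    have := cos_ub y hy; linarith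
  have h := mono0 hd h0 (by norm_num) hx
  beta_reduce at h
  linarith

private lemma cos_lb (x : ℝ) (hx : 0 ≤ x) :
    1 - x ^ 2 / 2 + x ^ 4 / 24 - x ^ 6 / 720 ≤ Real.cos x := by
  have hd : ∀ y : ℝ, HasDerivAt
      (fun y => Real.cos y - 1 + y ^ 2 / 2 - y ^ 4 / 24 + y ^ 6 / 720)
      (y - y ^ 3 / 6 + y ^ 5 / 120 - Real.sin y) y := by
    intro y
    have h := ((((Real.hasDerivAt_cos y).sub (hasDerivAt_const y (1 : ℝ))).add
      ((hasDerivAt_pow 2 y).div_const 2)).sub ((hasDerivAt_pow 4 y).div_const 24)).add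
      ((hasDerivAt_pow 6 y).div_const 720)
    refine h.congr_deriv ?_
    norm_num
    ring
  have h0 : ∀ y : ℝ, 0 ≤ y → 0 ≤ y - y ^ 3 / 6 + y ^ 5 / 120 - Real.sin y := fun y hy => by
    have := sin_ub y hy; linarith
  have h := mono0 hd h0 (by norm_num) hx
  beta_reduce at h
  linarith

set_option maxHeartbeats 2000000 in
theorem g1_pos (x : ℝ) (hx : 0 < x)
    (hx' : x ≤ -((π ^ 3 - 60 * (π - 2)) * π ^ 3) / (240 * (π ^ 3 - 24 * (π - 2)))) :
    2 * (8 * (π - 2) ^ 2 * (π ^ 3 - 60 * π + 120) * x ^ 8 -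
          6 * (π - 2) * (π ^ 6 - 100 * π ^ 4 + 200 * π ^ 3 - 480 * (π - 2) ^ 2) * x ^ 6 +
          3 * π ^ 3 * (π ^ 6 - 720 * (π - 2) ^ 2) * x ^ 4 +
          540 * π ^ 6 * (π - 2) * x ^ 2 - 45 * π ^ 9) * Real.sin x ^ 3 +
      90 * x ^ 3 * (π ^ 3 - 4 * (π - 2) * x ^ 2) ^ 3 * Real.cos x > 0 := by
  have p1l : (3.141592 : ℝ) < π := pi_gt_d6
  have p1u : π < (3.141593 : ℝ) := pi_lt_d6
  have p2l : (9.8696 : ℝ) < π ^ 2 := by nlinarith [p1l, p1u]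
  have p2u : π ^ 2 < (9.869607 : ℝ) := by nlinarith [p1l, p1u]
  have p3l : (31.006256 : ℝ) < π ^ 3 := by nlinarith [p2l, p2u, p1l, p1u]
  have p3u : π ^ 3 < (31.006289 : ℝ) := by nlinarith [p2l, p2u, p1l, p1u]
  have p4l : (97.409005 : ℝ) < π ^ 4 := by nlinarith [p3l, p3u, p1l, p1u]
  have p4u : π ^ 4 < (97.409141 : ℝ) := by nlinarith [p3l, p3u, p1l, p1u]
  have p5l : (306.01935 : ℝ) < π ^ 5 := by nlinarith [p4l, p4u, p1l, p1u]
  have p5u : π ^ 5 < (306.019876 : ℝ) := by nlinarith [p4l, p4u, p1l, p1u]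
  have p6l : (961.387941 : ℝ) < π ^ 6 := by nlinarith [p5l, p5u, p1l, p1u]
  have p6u : π ^ 6 < (961.389901 : ℝ) := by nlinarith [p5l, p5u, p1l, p1u]
  have p7l : (3020.288664 : ℝ) < π ^ 7 := by nlinarith [p6l, p6u, p1l, p1u]
  have p7u : π ^ 7 < (3020.295784 : ℝ) := by nlinarith [p6l, p6u, p1l, p1u]
  have p9l : (29809.041885 : ℝ) < π ^ 9 := by nlinarith [p4l, p5l, p4u, p5u]
  have p9u : π ^ 9 < (29809.131137 : ℝ) := by nlinarith [p4l, p5l, p4u, p5u]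
  -- x ≤ 1.35
  have hD : (0 : ℝ) < 240 * (π ^ 3 - 24 * (π - 2)) := by linarith [p3l, p1u]
  have hc : x ≤ 1.35 := by
    refine le_trans hx' ?_
    rw [div_le_iff₀ hD]
    linarith [p3l, p3u, p4u, p6l]
  -- powers of x bounds
  have hx2 : x ^ 2 ≤ 1.8225 :=
    le_trans (pow_le_pow_left₀ hx.le hc 2) (by norm_num)
  have hx4 : x ^ 4 ≤ 3.32151 :=
    le_trans (pow_le_pow_left₀ hx.le hc 4) (by norm_num)
  have hx6 : x ^ 6 ≤ 6.053452 :=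
    le_trans (pow_le_pow_left₀ hx.le hc 6) (by norm_num)
  have hx10 : x ^ 10 ≤ 20.1083 :=
    le_trans (pow_le_pow_left₀ hx.le hc 10) (by norm_num)
  have hx14 : x ^ 14 ≤ 66.794 :=
    le_trans (pow_le_pow_left₀ hx.le hc 14) (by norm_num)
  -- sin and cos bounds
  have hs0 : 0 < Real.sin x := Real.sin_pos_of_pos_of_lt_pi hx (by linarith)
  have hsu : Real.sin x ≤ x - x ^ 3 / 6 + x ^ 5 / 120 := sin_ub x hx.le
  have hcl : 1 - x ^ 2 / 2 + x ^ 4 / 24 - x ^ 6 / 720 ≤ Real.cos x := cos_lb x hx.le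
  have hsin3 : Real.sin x ^ 3 ≤ (x - x ^ 3 / 6 + x ^ 5 / 120) ^ 3 :=
    pow_le_pow_left₀ hs0.le hsu 3
  -- A < 0
  have hA : 8 * (π - 2) ^ 2 * (π ^ 3 - 60 * π + 120) * x ^ 8 -
      6 * (π - 2) * (π ^ 6 - 100 * π ^ 4 + 200 * π ^ 3 - 480 * (π - 2) ^ 2) * x ^ 6 +
      3 * π ^ 3 * (π ^ 6 - 720 * (π - 2) ^ 2) * x ^ 4 +
      540 * π ^ 6 * (π - 2) * x ^ 2 - 45 * π ^ 9 < 0 := by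
    have c8 : 8 * (π - 2) ^ 2 * (π ^ 3 - 60 * π + 120) ≤ 0 := by linarith [p1l, p1u, p2l, p2u, p3l, p3u, p4l, p4u, p5l, p5u]
    have m8 : 8 * (π - 2) ^ 2 * (π ^ 3 - 60 * π + 120) * x ^ 8 ≤ 0 :=
      mul_nonpos_of_nonpos_of_nonneg c8 (by positivity)
    have c6 : -6 * ((π - 2) * (π ^ 6 - 100 * π ^ 4 + 200 * π ^ 3 - 480 * (π - 2) ^ 2)) ≤
        21946 := by linarith [p1l, p1u, p2l, p2u, p3l, p3u, p4l, p4u, p5l, p5u, p6l, p6u, p7l, p7u]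
    have m6 : -6 * ((π - 2) * (π ^ 6 - 100 * π ^ 4 + 200 * π ^ 3 - 480 * (π - 2) ^ 2)) * x ^ 6 ≤
        21946 * x ^ 6 := mul_le_mul_of_nonneg_right c6 (by positivity)
    have c4 : 3 * π ^ 3 * (π ^ 6 - 720 * (π - 2) ^ 2) ≤ 2147 := by linarith [p3l, p3u, p4l, p4u, p5l, p5u, p9l, p9u]
    have m4 : 3 * π ^ 3 * (π ^ 6 - 720 * (π - 2) ^ 2) * x ^ 4 ≤ 2147 * x ^ 4 :=
      mul_le_mul_of_nonneg_right c4 (by positivity)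
    have c2 : 540 * π ^ 6 * (π - 2) ≤ 592661 := by linarith [p6l, p6u, p7l, p7u]
    have m2 : 540 * π ^ 6 * (π - 2) * x ^ 2 ≤ 592661 * x ^ 2 :=
      mul_le_mul_of_nonneg_right c2 (by positivity)
    linarith [m8, m6, m4, m2, hx2, hx4, hx6, p9l]
  -- B > 0
  have hBf : (0 : ℝ) < π ^ 3 - 4 * (π - 2) * x ^ 2 := by
    have h1 : (π - 2) * x ^ 2 ≤ 1.141593 * 1.8225 :=
      mul_le_mul (by linarith) hx2 (sq_nonneg x) (by norm_num)
    linarith [h1, p3l]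
  have hB : (0 : ℝ) < 90 * x ^ 3 * (π ^ 3 - 4 * (π - 2) * x ^ 2) ^ 3 := by positivity
  -- Q > 0
  have hQ : (0 : ℝ) <
      (4800*π^3 + (-4800)*π^4 + 1200*π^5 + (-120)*π^6 + 60*π^7 + (-47/24)*π^9)
      + (7680 + (-11520)*π + 5760*π^2 + (-4448)*π^3 + 3488*π^4 + (-872)*π^5 + 13*π^6 +
        (-13/2)*π^7 + (91/160)*π^9)*x^2
      + ((-6912) + 10368*π + (-5184)*π^2 + 1552*π^3 + (-688)*π^4 + 172*π^5 + (13/20)*π^6 +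
        (-13/40)*π^7 + (-43/576)*π^9)*x^4
      + ((4096/3) + (-2048)*π + 1024*π^2 + (-2174/9)*π^3 + (638/9)*π^4 + (-319/18)*π^5 +
        (-17/72)*π^6 + (17/144)*π^7 + (103/19200)*π^9)*x^6
      + ((-6352/45) + (3176/15)*π + (-1588/15)*π^2 + (2936/135)*π^3 + (-554/135)*π^4 +
        (277/270)*π^5 + (49/2400)*π^6 + (-49/4800)*π^7 + (-1/4800)*π^9)*x^8
      + ((128/15) + (-64/5)*π + (32/5)*π^2 + (-1067/900)*π^3 + (107/900)*π^4 +
        (-107/3600)*π^5 + (-1/1200)*π^6 + (1/2400)*π^7 + (1/288000)*π^9)*x^10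
      + ((-22/75) + (11/25)*π + (-11/50)*π^2 + (67/1800)*π^3 + (-1/1800)*π^4 + (1/7200)*π^5 +
        (1/72000)*π^6 + (-1/144000)*π^7)*x^12
      + ((1/225) + (-1/150)*π + (1/300)*π^2 + (-7/13500)*π^3 + (-1/27000)*π^4 +
        (1/108000)*π^5)*x^14 := by
    have q0 : (55963 : ℝ) ≤
        4800*π^3 + (-4800)*π^4 + 1200*π^5 + (-120)*π^6 + 60*π^7 + (-47/24)*π^9 := by
      linarith [p1l, p1u, p2l, p2u, p3l, p3u, p4l, p4u, p5l, p5u, p6l, p6u, p7l, p7u, p9l, p9u]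
    have q1 : (-26845 : ℝ) * x^2 ≤
        (7680 + (-11520)*π + 5760*π^2 + (-4448)*π^3 + 3488*π^4 + (-872)*π^5 + 13*π^6 +
        (-13/2)*π^7 + (91/160)*π^9)*x^2 := by
      apply mul_le_mul_of_nonneg_right _ (sq_nonneg x)
      linarith [p1l, p1u, p2l, p2u, p3l, p3u, p4l, p4u, p5l, p5u, p6l, p6u, p7l, p7u, p9l, p9u]
    have q2 : (0 : ℝ) ≤
        ((-6912) + 10368*π + (-5184)*π^2 + 1552*π^3 + (-688)*π^4 + 172*π^5 + (13/20)*π^6 +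
        (-13/40)*π^7 + (-43/576)*π^9)*x^4 := by
      apply mul_nonneg _ (by positivity)
      linarith [p1l, p1u, p2l, p2u, p3l, p3u, p4l, p4u, p5l, p5u, p6l, p6u, p7l, p7u, p9l, p9u]
    have q3 : (-681 : ℝ) * x^6 ≤
        ((4096/3) + (-2048)*π + 1024*π^2 + (-2174/9)*π^3 + (638/9)*π^4 + (-319/18)*π^5 +
        (-17/72)*π^6 + (17/144)*π^7 + (103/19200)*π^9)*x^6 := by
      apply mul_le_mul_of_nonneg_right _ (by positivity)
      linarith [p1l, p1u, p2l, p2u, p3l, p3u, p4l, p4u, p5l, p5u, p6l, p6u, p7l, p7u, p9l, p9u]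
    have q4 : (0 : ℝ) ≤
        ((-6352/45) + (3176/15)*π + (-1588/15)*π^2 + (2936/135)*π^3 + (-554/135)*π^4 +
        (277/270)*π^5 + (49/2400)*π^6 + (-49/4800)*π^7 + (-1/4800)*π^9)*x^8 := by
      apply mul_nonneg _ (by positivity)
      linarith [p1l, p1u, p2l, p2u, p3l, p3u, p4l, p4u, p5l, p5u, p6l, p6u, p7l, p7u, p9l, p9u]
    have q5 : (-2.3 : ℝ) * x^10 ≤
        ((128/15) + (-64/5)*π + (32/5)*π^2 + (-1067/900)*π^3 + (107/900)*π^4 +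
        (-107/3600)*π^5 + (-1/1200)*π^6 + (1/2400)*π^7 + (1/288000)*π^9)*x^10 := by
      apply mul_le_mul_of_nonneg_right _ (by positivity)
      linarith [p1l, p1u, p2l, p2u, p3l, p3u, p4l, p4u, p5l, p5u, p6l, p6u, p7l, p7u, p9l, p9u]
    have q6 : (0 : ℝ) ≤
        ((-22/75) + (11/25)*π + (-11/50)*π^2 + (67/1800)*π^3 + (-1/1800)*π^4 + (1/7200)*π^5 +
        (1/72000)*π^6 + (-1/144000)*π^7)*x^12 := by
      apply mul_nonneg _ (by positivity)
      linarith [p1l, p1u, p2l, p2u, p3l, p3u, p4l, p4u, p5l, p5u, p6l, p6u, p7l, p7u, p9l, p9u]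
    have q7 : (-0.0005 : ℝ) * x^14 ≤
        ((1/225) + (-1/150)*π + (1/300)*π^2 + (-7/13500)*π^3 + (-1/27000)*π^4 +
        (1/108000)*π^5)*x^14 := by
      apply mul_le_mul_of_nonneg_right _ (by positivity)
      linarith [p1l, p1u, p2l, p2u, p3l, p3u, p4l, p4u, p5l, p5u, p6l, p6u, p7l, p7u, p9l, p9u]
    linarith [q0, q1, q2, q3, q4, q5, q6, q7, hx2, hx6, hx10, hx14]
  -- key polynomial inequality
  have key : (0 : ℝ) <
      2 * (8 * (π - 2) ^ 2 * (π ^ 3 - 60 * π + 120) * x ^ 8 -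
          6 * (π - 2) * (π ^ 6 - 100 * π ^ 4 + 200 * π ^ 3 - 480 * (π - 2) ^ 2) * x ^ 6 +
          3 * π ^ 3 * (π ^ 6 - 720 * (π - 2) ^ 2) * x ^ 4 +
          540 * π ^ 6 * (π - 2) * x ^ 2 - 45 * π ^ 9) * (x - x ^ 3 / 6 + x ^ 5 / 120) ^ 3 +
      90 * x ^ 3 * (π ^ 3 - 4 * (π - 2) * x ^ 2) ^ 3 *
        (1 - x ^ 2 / 2 + x ^ 4 / 24 - x ^ 6 / 720) := by
    have hid : 2 * (8 * (π - 2) ^ 2 * (π ^ 3 - 60 * π + 120) * x ^ 8 -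
          6 * (π - 2) * (π ^ 6 - 100 * π ^ 4 + 200 * π ^ 3 - 480 * (π - 2) ^ 2) * x ^ 6 +
          3 * π ^ 3 * (π ^ 6 - 720 * (π - 2) ^ 2) * x ^ 4 +
          540 * π ^ 6 * (π - 2) * x ^ 2 - 45 * π ^ 9) * (x - x ^ 3 / 6 + x ^ 5 / 120) ^ 3 +
      90 * x ^ 3 * (π ^ 3 - 4 * (π - 2) * x ^ 2) ^ 3 *
        (1 - x ^ 2 / 2 + x ^ 4 / 24 - x ^ 6 / 720) =
      x ^ 9 * (
      (4800*π^3 + (-4800)*π^4 + 1200*π^5 + (-120)*π^6 + 60*π^7 + (-47/24)*π^9)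
      + (7680 + (-11520)*π + 5760*π^2 + (-4448)*π^3 + 3488*π^4 + (-872)*π^5 + 13*π^6 +
        (-13/2)*π^7 + (91/160)*π^9)*x^2
      + ((-6912) + 10368*π + (-5184)*π^2 + 1552*π^3 + (-688)*π^4 + 172*π^5 + (13/20)*π^6 +
        (-13/40)*π^7 + (-43/576)*π^9)*x^4
      + ((4096/3) + (-2048)*π + 1024*π^2 + (-2174/9)*π^3 + (638/9)*π^4 + (-319/18)*π^5 +
        (-17/72)*π^6 + (17/144)*π^7 + (103/19200)*π^9)*x^6
      + ((-6352/45) + (3176/15)*π + (-1588/15)*π^2 + (2936/135)*π^3 + (-554/135)*π^4 +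
        (277/270)*π^5 + (49/2400)*π^6 + (-49/4800)*π^7 + (-1/4800)*π^9)*x^8
      + ((128/15) + (-64/5)*π + (32/5)*π^2 + (-1067/900)*π^3 + (107/900)*π^4 +
        (-107/3600)*π^5 + (-1/1200)*π^6 + (1/2400)*π^7 + (1/288000)*π^9)*x^10
      + ((-22/75) + (11/25)*π + (-11/50)*π^2 + (67/1800)*π^3 + (-1/1800)*π^4 + (1/7200)*π^5 +
        (1/72000)*π^6 + (-1/144000)*π^7)*x^12
      + ((1/225) + (-1/150)*π + (1/300)*π^2 + (-7/13500)*π^3 + (-1/27000)*π^4 +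
        (1/108000)*π^5)*x^14) := by ring
    rw [hid]
    exact mul_pos (pow_pos hx 9) hQ
  -- combine
  have f1 : 2 * (8 * (π - 2) ^ 2 * (π ^ 3 - 60 * π + 120) * x ^ 8 -
          6 * (π - 2) * (π ^ 6 - 100 * π ^ 4 + 200 * π ^ 3 - 480 * (π - 2) ^ 2) * x ^ 6 +
          3 * π ^ 3 * (π ^ 6 - 720 * (π - 2) ^ 2) * x ^ 4 +
          540 * π ^ 6 * (π - 2) * x ^ 2 - 45 * π ^ 9) * (x - x ^ 3 / 6 + x ^ 5 / 120) ^ 3 ≤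
      2 * (8 * (π - 2) ^ 2 * (π ^ 3 - 60 * π + 120) * x ^ 8 -
          6 * (π - 2) * (π ^ 6 - 100 * π ^ 4 + 200 * π ^ 3 - 480 * (π - 2) ^ 2) * x ^ 6 +
          3 * π ^ 3 * (π ^ 6 - 720 * (π - 2) ^ 2) * x ^ 4 +
          540 * π ^ 6 * (π - 2) * x ^ 2 - 45 * π ^ 9) * Real.sin x ^ 3 :=
    mul_le_mul_of_nonpos_left hsin3 (by linarith)
  have f2 : 90 * x ^ 3 * (π ^ 3 - 4 * (π - 2) * x ^ 2) ^ 3 *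
        (1 - x ^ 2 / 2 + x ^ 4 / 24 - x ^ 6 / 720) ≤
      90 * x ^ 3 * (π ^ 3 - 4 * (π - 2) * x ^ 2) ^ 3 * Real.cos x :=
    mul_le_mul_of_nonneg_left hcl hB.le
  linarith
end

section
/- The limits of F₁(x), F₁'(x), and F₁''(x) as x → 0⁺ are all equal to 0, where F₁(x) = ln(sin x) - ln x - θ₁(x)·ln(2/π + ((π-2)/π³)(π²-4x²)) and θ₁(x) = ((π³-60π+120)/(720(π-2)))x² + π³/(24(π-2)). -/
open Real Filter

noncomputable def F₁ (x : ℝ) : ℝ :=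
  Real.log (Real.sin x) - Real.log x -
    ((π ^ 3 - 60 * π + 120) / (720 * (π - 2)) * x ^ 2 + π ^ 3 / (24 * (π - 2))) *
      Real.log (2 / π + (π - 2) / π ^ 3 * (π ^ 2 - 4 * x ^ 2))

noncomputable def c1 : ℝ := (π ^ 3 - 60 * π + 120) / (720 * (π - 2))
noncomputable def c2 : ℝ := π ^ 3 / (24 * (π - 2))
noncomputable def Kc : ℝ := 8 * (π - 2) / π ^ 3
noncomputable def gg (x : ℝ) : ℝ := 2 / π + (π - 2) / π ^ 3 * (π ^ 2 - 4 * x ^ 2)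

noncomputable def G (x : ℝ) : ℝ :=
  Real.cos x / Real.sin x - x⁻¹ -
    (c1 * (2 * x ^ 1) * Real.log (gg x) + (c1 * x ^ 2 + c2) * (-(Kc * x) / gg x))

noncomputable def H (x : ℝ) : ℝ :=
  ((x ^ 2)⁻¹ - ((Real.sin x) ^ 2)⁻¹) - 2 * c1 * Real.log (gg x) + 4 * c1 * Kc * x ^ 2 / gg x
    + (c1 * x ^ 2 + c2) * (Kc / gg x + Kc ^ 2 * x ^ 2 / (gg x) ^ 2)

lemma two_lt_pi' : (2:ℝ) < π := by linarith [Real.pi_gt_three]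

lemma gg0 : gg 0 = 1 := by
  have h : π ≠ 0 := Real.pi_ne_zero
  unfold gg; field_simp; ring

lemma gg_cont : Continuous gg := by unfold gg; fun_prop

lemma gg0_ne : gg 0 ≠ 0 := by rw [gg0]; norm_num

lemma c2K : c2 * Kc = 1/3 := by
  have h : π ≠ 0 := Real.pi_ne_zero
  have h2 : π - 2 ≠ 0 := by have := two_lt_pi'; linarith
  unfold c2 Kc; field_simp; ring

lemma gg_pos {x : ℝ} (hx : x ∈ Set.Ioo 0 (π/2)) : 0 < gg x := by
  have h2 := two_lt_pi'
  have h1 : 0 < π := by linarith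
  have hxx : x < π/2 := hx.2
  have hx0 : 0 < x := hx.1
  have : 4 * x ^ 2 < π ^ 2 := by nlinarith
  unfold gg
  have : 0 < (π - 2) / π ^ 3 * (π ^ 2 - 4 * x ^ 2) := by
    apply mul_pos
    · apply div_pos (by linarith)
      positivity
    · linarith
  positivity

lemma sin_pos' {x : ℝ} (hx : x ∈ Set.Ioo 0 (π/2)) : 0 < Real.sin x :=
  Real.sin_pos_of_pos_of_lt_pi hx.1 (lt_trans hx.2 (by linarith [Real.pi_pos]))

lemma hasDerivAt_gg (x : ℝ) : HasDerivAt gg (-(Kc * x)) x := by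
  have h : HasDerivAt (fun x : ℝ => 2 / π + (π - 2) / π ^ 3 * (π ^ 2 - 4 * x ^ 2))
      ((π - 2) / π ^ 3 * (-(4 * (2 * x ^ 1)))) x :=
    ((((hasDerivAt_pow 2 x).const_mul 4).const_sub (π ^ 2)).const_mul ((π - 2) / π ^ 3)).const_add (2 / π)
  have h2 : (π - 2) / π ^ 3 * (-(4 * (2 * x ^ 1))) = -(Kc * x) := by unfold Kc; ring
  rw [h2] at h
  exact h

lemma hasDerivAt_F1 {x : ℝ} (hs : Real.sin x ≠ 0) (hx0 : x ≠ 0) (hg : gg x ≠ 0) :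
    HasDerivAt F₁ (G x) x := by
  have h1 : HasDerivAt (fun y => Real.log (Real.sin y)) (Real.cos x / Real.sin x) x :=
    (Real.hasDerivAt_sin x).log hs
  have h2 : HasDerivAt Real.log x⁻¹ x := Real.hasDerivAt_log hx0
  have h3 : HasDerivAt (fun y : ℝ => c1 * y ^ 2 + c2) (c1 * (2 * x ^ 1)) x :=
    ((hasDerivAt_pow 2 x).const_mul c1).add_const c2
  have h5 : HasDerivAt (fun y => Real.log (gg y)) (-(Kc * x) / gg x) x :=
    (hasDerivAt_gg x).log hg
  exact (h1.sub h2).sub (h3.mul h5)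

lemma hasDerivAt_G {x : ℝ} (hs : Real.sin x ≠ 0) (hx0 : x ≠ 0) (hg : gg x ≠ 0) :
    HasDerivAt G (H x) x := by
  have hcot : HasDerivAt (fun y => Real.cos y / Real.sin y) (-((Real.sin x) ^ 2)⁻¹) x := by
    have h := (Real.hasDerivAt_cos x).div (Real.hasDerivAt_sin x) hs
    refine h.congr_deriv ?_
    rw [show -Real.sin x * Real.sin x - Real.cos x * Real.cos x = -1 by
      nlinarith [Real.sin_sq_add_cos_sq x]]
    rw [neg_div, one_div]
  have hinv : HasDerivAt (fun y : ℝ => y⁻¹) (-(x ^ 2)⁻¹) x := hasDerivAt_inv hx0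
  have h3 : HasDerivAt (fun y : ℝ => c1 * y ^ 2 + c2) (c1 * (2 * x ^ 1)) x :=
    ((hasDerivAt_pow 2 x).const_mul c1).add_const c2
  have h5 : HasDerivAt (fun y => Real.log (gg y)) (-(Kc * x) / gg x) x :=
    (hasDerivAt_gg x).log hg
  have hlin : HasDerivAt (fun y : ℝ => c1 * (2 * y ^ 1)) (c1 * 2) x := by
    have := (hasDerivAt_id x).const_mul (c1 * 2)
    simpa [mul_assoc] using this
  have hq : HasDerivAt (fun y => -(Kc * y) / gg y)
      ((-Kc * gg x - -(Kc * x) * -(Kc * x)) / gg x ^ 2) x := by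
    have hn : HasDerivAt (fun y : ℝ => -(Kc * y)) (-Kc) x := by
      have := ((hasDerivAt_id x).const_mul Kc).neg
      exact this.congr_deriv (by ring)
    exact hn.div (hasDerivAt_gg x) hg
  have h := (hcot.sub hinv).sub ((hlin.mul h5).add (h3.mul hq))
  refine h.congr_deriv ?_
  unfold H
  field_simp
  ring

lemma sinc_lim : Tendsto (fun x : ℝ => Real.sin x / x) (nhdsWithin 0 (Set.Ioi 0)) (nhds 1) := by
  have h := (Real.hasDerivAt_sin 0)
  rw [Real.cos_zero, hasDerivAt_iff_tendsto_slope] at h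
  have h2 : Tendsto (slope Real.sin 0) (nhdsWithin 0 (Set.Ioi 0)) (nhds 1) :=
    h.mono_left (nhdsWithin_mono _ (by intro x hx; exact ne_of_gt hx))
  refine h2.congr (fun x => ?_)
  simp [slope_def_field]

lemma cos_slope_lim : Tendsto (fun x : ℝ => (Real.cos x - 1) / x) (nhdsWithin 0 (Set.Ioi 0)) (nhds 0) := by
  have h := (Real.hasDerivAt_cos 0)
  rw [Real.sin_zero, neg_zero, hasDerivAt_iff_tendsto_slope] at h
  have h2 : Tendsto (slope Real.cos 0) (nhdsWithin 0 (Set.Ioi 0)) (nhds 0) :=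
    h.mono_left (nhdsWithin_mono _ (by intro x hx; exact ne_of_gt hx))
  refine h2.congr (fun x => ?_)
  simp [slope_def_field]

lemma cube_lim : Tendsto (fun x : ℝ => (Real.sin x - x) / x ^ 3) (nhdsWithin 0 (Set.Ioi 0)) (nhds (-(1/6))) := by
  have step2 : Tendsto (fun x : ℝ => (Real.cos x - 1) / (3 * x ^ 2)) (nhdsWithin 0 (Set.Ioi 0)) (nhds (-(1/6))) := by
    apply HasDerivAt.lhopital_zero_nhdsGT
      (f' := fun x => -Real.sin x) (g' := fun x => 3 * (2 * x))
    · filter_upwards with x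
      simpa using (Real.hasDerivAt_cos x).sub_const 1
    · filter_upwards with x
      simpa using (hasDerivAt_pow 2 x).const_mul 3
    · filter_upwards [self_mem_nhdsWithin] with x hx
      have : (0:ℝ) < x := hx
      positivity
    · have : Tendsto (fun x : ℝ => Real.cos x - 1) (nhds 0) (nhds 0) := by
        have h : ContinuousAt (fun x : ℝ => Real.cos x - 1) 0 := by fun_prop
        simpa using h.tendsto
      exact this.mono_left nhdsWithin_le_nhds
    · have : Tendsto (fun x : ℝ => 3 * x ^ 2) (nhds (0:ℝ)) (nhds 0) := by
        have h : ContinuousAt (fun x : ℝ => 3 * x ^ 2) 0 := by fun_prop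
        simpa using h.tendsto
      exact this.mono_left nhdsWithin_le_nhds
    · have h1 : Tendsto (fun x : ℝ => -(1/6) * (Real.sin x / x)) (nhdsWithin 0 (Set.Ioi 0)) (nhds (-(1/6))) := by
        simpa using (sinc_lim.const_mul (-(1/6) : ℝ))
      refine h1.congr' ?_
      filter_upwards [self_mem_nhdsWithin] with x hx
      have hx0 : (x:ℝ) ≠ 0 := ne_of_gt hx
      have h6 : (3:ℝ) * (2 * x) = 6 * x := by ring
      rw [h6]
      field_simp
  apply HasDerivAt.lhopital_zero_nhdsGT
    (f' := fun x => Real.cos x - 1) (g' := fun x => 3 * x ^ 2)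
  · filter_upwards with x
    exact (Real.hasDerivAt_sin x).sub (hasDerivAt_id x)
  · filter_upwards with x
    simpa using (hasDerivAt_pow 3 x)
  · filter_upwards [self_mem_nhdsWithin] with x hx
    have : (0:ℝ) < x := hx
    positivity
  · have : Tendsto (fun x : ℝ => Real.sin x - x) (nhds 0) (nhds 0) := by
      have h : ContinuousAt (fun x : ℝ => Real.sin x - x) 0 := by fun_prop
      simpa using h.tendsto
    exact this.mono_left nhdsWithin_le_nhds
  · have : Tendsto (fun x : ℝ => x ^ 3) (nhds (0:ℝ)) (nhds 0) := by
      have h : ContinuousAt (fun x : ℝ => x ^ 3) (0:ℝ) := by fun_prop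
      simpa using h.tendsto
    exact this.mono_left nhdsWithin_le_nhds
  · exact step2

lemma xsin_lim : Tendsto (fun x : ℝ => x / Real.sin x) (nhdsWithin 0 (Set.Ioi 0)) (nhds 1) := by
  have h := sinc_lim.inv₀ one_ne_zero
  simpa [inv_div] using h

lemma Ioo_mem : Set.Ioo (0:ℝ) (π/2) ∈ nhdsWithin (0:ℝ) (Set.Ioi 0) :=
  Ioo_mem_nhdsGT (by linarith [Real.pi_pos])

lemma lim_F1 : Tendsto F₁ (nhdsWithin 0 (Set.Ioi 0)) (nhds 0) := by
  have hlog : Tendsto (fun x => Real.log (Real.sin x / x)) (nhdsWithin 0 (Set.Ioi 0)) (nhds 0) := by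
    have h := (Real.continuousAt_log (by norm_num : (1:ℝ) ≠ 0)).tendsto.comp sinc_lim
    simpa [Function.comp_def] using h
  have hQ : Tendsto (fun x => (c1 * x ^ 2 + c2) * Real.log (gg x)) (nhdsWithin 0 (Set.Ioi 0)) (nhds 0) := by
    have hc : ContinuousAt (fun x => (c1 * x ^ 2 + c2) * Real.log (gg x)) 0 :=
      ContinuousAt.mul (by fun_prop) (gg_cont.continuousAt.log gg0_ne)
    have h := hc.tendsto.mono_left (nhdsWithin_le_nhds (s := Set.Ioi 0))
    simpa [gg0] using h
  have h := hlog.sub hQ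
  rw [sub_zero] at h
  refine h.congr' ?_
  filter_upwards [Ioo_mem] with x hx
  have hs : Real.sin x ≠ 0 := (sin_pos' hx).ne'
  have hx0 : x ≠ 0 := ne_of_gt hx.1
  show Real.log (Real.sin x / x) - (c1 * x ^ 2 + c2) * Real.log (gg x) = F₁ x
  rw [Real.log_div hs hx0]
  rfl

lemma lim_G : Tendsto G (nhdsWithin 0 (Set.Ioi 0)) (nhds 0) := by
  have hxlim : Tendsto (fun x : ℝ => x) (nhdsWithin 0 (Set.Ioi 0)) (nhds 0) :=
    tendsto_id.mono_left nhdsWithin_le_nhds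
  have hA : Tendsto (fun x => (Real.cos x - 1)/x - (Real.sin x - x)/x^3 * x)
      (nhdsWithin 0 (Set.Ioi 0)) (nhds 0) := by
    have h := cos_slope_lim.sub (cube_lim.mul hxlim)
    simpa using h
  have hP := hA.mul xsin_lim
  rw [zero_mul] at hP
  have hQ : Tendsto (fun x => c1 * (2 * x ^ 1) * Real.log (gg x) + (c1 * x ^ 2 + c2) * (-(Kc * x) / gg x))
      (nhdsWithin 0 (Set.Ioi 0)) (nhds 0) := by
    have hc : ContinuousAt (fun x => c1 * (2 * x ^ 1) * Real.log (gg x) + (c1 * x ^ 2 + c2) * (-(Kc * x) / gg x)) 0 := by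
      apply ContinuousAt.add
      · exact ContinuousAt.mul (by fun_prop) (gg_cont.continuousAt.log gg0_ne)
      · exact ContinuousAt.mul (by fun_prop) (ContinuousAt.div (by fun_prop) gg_cont.continuousAt gg0_ne)
    have h := hc.tendsto.mono_left (nhdsWithin_le_nhds (s := Set.Ioi 0))
    simpa [gg0] using h
  have h := hP.sub hQ
  rw [sub_zero] at h
  refine h.congr' ?_
  filter_upwards [Ioo_mem] with x hx
  have hs : Real.sin x ≠ 0 := (sin_pos' hx).ne'
  have hx0 : x ≠ 0 := ne_of_gt hx.1
  have hg : gg x ≠ 0 := (gg_pos hx).ne'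
  show ((Real.cos x - 1)/x - (Real.sin x - x)/x^3 * x) * (x / Real.sin x) - _ = G x
  unfold G
  field_simp
  ring

lemma lim_H : Tendsto H (nhdsWithin 0 (Set.Ioi 0)) (nhds 0) := by
  have hsum : Tendsto (fun x : ℝ => Real.sin x / x + 1) (nhdsWithin 0 (Set.Ioi 0)) (nhds 2) := by
    have h := sinc_lim.add_const 1
    norm_num at h
    exact h
  have hB : Tendsto (fun x => (Real.sin x - x)/x^3 * (Real.sin x / x + 1) * (x / Real.sin x)^2)
      (nhdsWithin 0 (Set.Ioi 0)) (nhds (-(1/3))) := by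
    have h := (cube_lim.mul hsum).mul (xsin_lim.pow 2)
    norm_num at h
    convert h using 2
  have hR : Tendsto (fun x => -(2 * c1 * Real.log (gg x)) + 4 * c1 * Kc * x ^ 2 / gg x
      + (c1 * x ^ 2 + c2) * (Kc / gg x + Kc ^ 2 * x ^ 2 / (gg x) ^ 2))
      (nhdsWithin 0 (Set.Ioi 0)) (nhds (c2 * Kc)) := by
    have hgc : ContinuousAt gg 0 := gg_cont.continuousAt
    have hc : ContinuousAt (fun x => -(2 * c1 * Real.log (gg x)) + 4 * c1 * Kc * x ^ 2 / gg x
        + (c1 * x ^ 2 + c2) * (Kc / gg x + Kc ^ 2 * x ^ 2 / (gg x) ^ 2)) 0 := by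
      apply ContinuousAt.add
      apply ContinuousAt.add
      · exact ((hgc.log gg0_ne).const_mul _).neg
      · exact ContinuousAt.div (by fun_prop) hgc gg0_ne
      · apply ContinuousAt.mul (by fun_prop)
        apply ContinuousAt.add
        · exact ContinuousAt.div continuousAt_const hgc gg0_ne
        · exact ContinuousAt.div (by fun_prop) (by fun_prop) (by simp [gg0_ne])
    have h := hc.tendsto.mono_left (nhdsWithin_le_nhds (s := Set.Ioi 0))
    simpa [gg0] using h
  have h := hB.add hR
  rw [c2K] at h
  norm_num at h
  refine h.congr' ?_
  filter_upwards [Ioo_mem] with x hx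
  have hs : Real.sin x ≠ 0 := (sin_pos' hx).ne'
  have hx0 : x ≠ 0 := ne_of_gt hx.1
  have hg : gg x ≠ 0 := (gg_pos hx).ne'
  show (Real.sin x - x)/x^3 * (Real.sin x / x + 1) * (x / Real.sin x)^2 + _ = H x
  unfold H
  field_simp
  ring

theorem F1_limits :
    Tendsto F₁ (nhdsWithin 0 (Set.Ioi 0)) (nhds 0) ∧
    Tendsto (deriv F₁) (nhdsWithin 0 (Set.Ioi 0)) (nhds 0) ∧
    Tendsto (deriv (deriv F₁)) (nhdsWithin 0 (Set.Ioi 0)) (nhds 0) := by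
  have hev1 : deriv F₁ =ᶠ[nhdsWithin 0 (Set.Ioi 0)] G := by
    filter_upwards [Ioo_mem] with x hx
    exact (hasDerivAt_F1 (sin_pos' hx).ne' (ne_of_gt hx.1) (gg_pos hx).ne').deriv
  have hev2 : deriv (deriv F₁) =ᶠ[nhdsWithin 0 (Set.Ioi 0)] H := by
    filter_upwards [Ioo_mem] with x hx
    have h1 : deriv F₁ =ᶠ[nhds x] G := by
      filter_upwards [isOpen_Ioo.mem_nhds hx] with y hy
      exact (hasDerivAt_F1 (sin_pos' hy).ne' (ne_of_gt hy.1) (gg_pos hy).ne').deriv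
    rw [h1.deriv_eq]
    exact (hasDerivAt_G (sin_pos' hx).ne' (ne_of_gt hx.1) (gg_pos hx).ne').deriv
  exact ⟨lim_F1, lim_G.congr' hev1.symm, lim_H.congr' hev2.symm⟩
end

section
/- Let ω(x) = -((π³-24π+48)(π/2 - x)³)/(3(π-2)π³) + π³/(24π-48) and ω₁(x) = x/5 + 1. Then ω(x) > ω₁(x) for all x in (0, c₁), where c₁ = π/2 - c and c = -((π³-60(π-2))π³)/(240(π³-24(π-2))). -/
open Real

theorem omega_gt_omega1 (x : ℝ) (hx : 0 < x)
    (hx' : x < π / 2 + (π ^ 3 - 60 * (π - 2)) * π ^ 3 / (240 * (π ^ 3 - 24 * (π - 2)))) :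
    -((π ^ 3 - 24 * π + 48) * (π / 2 - x) ^ 3) / (3 * (π - 2) * π ^ 3) +
        π ^ 3 / (24 * π - 48) > x / 5 + 1 := by
  have hp1 : (3.141592 : ℝ) < π := pi_gt_d6
  have hp2 : π < 3.141593 := pi_lt_d6
  have hppos : (0:ℝ) < π := by linarith
  have hp3 : (0:ℝ) < π ^ 3 := by positivity
  have hpm2 : (0:ℝ) < π - 2 := by linarith
  have hden : (0:ℝ) < π ^ 3 - 24 * (π - 2) := by nlinarith [sq_nonneg (π - 3.141592)]
  have hden240 : (0:ℝ) < 240 * (π ^ 3 - 24 * (π - 2)) := by linarith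
  -- bound x < 0.23
  have hx23 : x < 23 / 100 := by
    have hfrac : (π ^ 3 - 60 * (π - 2)) * π ^ 3 / (240 * (π ^ 3 - 24 * (π - 2)))
        < 23 / 100 - π / 2 := by
      rw [div_lt_iff₀ hden240]
      nlinarith [sq_nonneg (π - 3.141592), sq_nonneg (π^2 - 9.8696), sq_nonneg (π^3 - 31.00627),
        mul_pos hp3 hp3, sq_nonneg ((π - 3.141592) * π), sq_nonneg ((π - 3.141592) * π^2)]
    linarith
  have hQ : (0:ℝ) < (20 * π ^ 3 - 480 * π + 960) * x ^ 2
      + (-30 * π ^ 4 + 720 * π ^ 2 - 1440 * π) * x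
      + (15 * π ^ 5 - 12 * π ^ 4 - 336 * π ^ 3 + 720 * π ^ 2) := by
    have ha : (0:ℝ) < 20 * π ^ 3 - 480 * π + 960 := by
      nlinarith [sq_nonneg (π - 3.141592)]
    have hb : -30 * π ^ 4 + 720 * π ^ 2 - 1440 * π < 0 := by
      nlinarith [sq_nonneg (π - 3.141592), sq_nonneg (π^2 - 9.8696)]
    have h1 : (0:ℝ) ≤ (20 * π ^ 3 - 480 * π + 960) * x ^ 2 := by positivity
    have h2 : (-30 * π ^ 4 + 720 * π ^ 2 - 1440 * π) * x
        > (-30 * π ^ 4 + 720 * π ^ 2 - 1440 * π) * (23/100) := by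
      exact mul_lt_mul_of_neg_left hx23 hb
    have h3 : (0:ℝ) < (-30 * π ^ 4 + 720 * π ^ 2 - 1440 * π) * (23/100)
        + (15 * π ^ 5 - 12 * π ^ 4 - 336 * π ^ 3 + 720 * π ^ 2) := by
      nlinarith [sq_nonneg (π - 3.141592), sq_nonneg (π^2 - 9.8696), sq_nonneg (π^3 - 31.00627),
        sq_nonneg ((π - 3.141592) * π), sq_nonneg ((π - 3.141592) * π^2)]
    linarith
  have hD : -((π ^ 3 - 24 * π + 48) * (π / 2 - x) ^ 3) / (3 * (π - 2) * π ^ 3) +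
      π ^ 3 / (24 * π - 48) - (x / 5 + 1)
      = x * ((20 * π ^ 3 - 480 * π + 960) * x ^ 2
        + (-30 * π ^ 4 + 720 * π ^ 2 - 1440 * π) * x
        + (15 * π ^ 5 - 12 * π ^ 4 - 336 * π ^ 3 + 720 * π ^ 2))
        / (60 * (π - 2) * π ^ 3) := by
    have h1 : (3 * (π - 2) * π ^ 3) ≠ 0 := by positivity
    have h2 : (24 * π - 48) ≠ 0 := by nlinarith
    have h3 : (60 * (π - 2) * π ^ 3) ≠ 0 := by positivity
    rw [div_add_div _ _ h1 h2, div_sub' (by positivity), div_eq_div_iff (by positivity) h3]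
    ring
  have hpos : (0:ℝ) < x * ((20 * π ^ 3 - 480 * π + 960) * x ^ 2
      + (-30 * π ^ 4 + 720 * π ^ 2 - 1440 * π) * x
      + (15 * π ^ 5 - 12 * π ^ 4 - 336 * π ^ 3 + 720 * π ^ 2))
      / (60 * (π - 2) * π ^ 3) := by
    apply div_pos (mul_pos hx hQ)
    positivity
  linarith [hD ▸ hpos]
end

section
/- Define P(x) = (-80π²+320π-320)x⁶ + (240π³-992π²+1088π-128)x⁵ + (-260π⁴+1216π³-1344π²-576π+960)x⁴ + (120π⁵-728π⁴+720π³+1472π²-1920π)x³ + (-20π⁶+212π⁵-132π⁴-1184π³+1440π²)x² + (-24π⁶-16π⁵+408π⁴-480π³)x + 11π⁶-52π⁵+60π⁴. Then P(x) > 0 for all x in (0, 23/100). -/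
open Real

lemma Q_pos (x : ℝ) (hx : 0 < x) (hx' : x < 23 / 100) :
    -105 * x ^ 6 + 940 * x ^ 5 - 1738 * x ^ 4 - 3371 * x ^ 3 + 10291 * x ^ 2 -
      3110 * x + 506 > 0 := by
  nlinarith [sq_nonneg x, sq_nonneg (x - 17/100), sq_nonneg (x^2), sq_nonneg (x^3),
    mul_pos hx hx, mul_pos (mul_pos hx hx) hx, sq_nonneg (x^2 - 17/100 * x),
    sq_nonneg (x^3 - 17/100 * x^2)]

theorem P_pos (x : ℝ) (hx : 0 < x) (hx' : x < 23 / 100) :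
    (-80 * π ^ 2 + 320 * π - 320) * x ^ 6 +
      (240 * π ^ 3 - 992 * π ^ 2 + 1088 * π - 128) * x ^ 5 +
      (-260 * π ^ 4 + 1216 * π ^ 3 - 1344 * π ^ 2 - 576 * π + 960) * x ^ 4 +
      (120 * π ^ 5 - 728 * π ^ 4 + 720 * π ^ 3 + 1472 * π ^ 2 - 1920 * π) * x ^ 3 +
      (-20 * π ^ 6 + 212 * π ^ 5 - 132 * π ^ 4 - 1184 * π ^ 3 + 1440 * π ^ 2) * x ^ 2 +
      (-24 * π ^ 6 - 16 * π ^ 5 + 408 * π ^ 4 - 480 * π ^ 3) * x +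
      11 * π ^ 6 - 52 * π ^ 5 + 60 * π ^ 4 > 0 := by
  have hpl : (3.141592 : ℝ) < π := pi_gt_d6
  have hpu : π < 3.141593 := pi_lt_d6
  have x2 : (0:ℝ) < x ^ 2 := by positivity
  have x3 : (0:ℝ) < x ^ 3 := by positivity
  have x4 : (0:ℝ) < x ^ 4 := by positivity
  have x5 : (0:ℝ) < x ^ 5 := by positivity
  have x6 : (0:ℝ) < x ^ 6 := by positivity
  have c6 : -80 * π ^ 2 + 320 * π - 320 ≥ -105 := by nlinarith
  have c5 : 240 * π ^ 3 - 992 * π ^ 2 + 1088 * π - 128 ≥ 940 := by nlinarith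
  have c4 : -260 * π ^ 4 + 1216 * π ^ 3 - 1344 * π ^ 2 - 576 * π + 960 ≥ -1738 := by nlinarith
  have c3 : 120 * π ^ 5 - 728 * π ^ 4 + 720 * π ^ 3 + 1472 * π ^ 2 - 1920 * π ≥ -3371 := by
    nlinarith
  have c2 : -20 * π ^ 6 + 212 * π ^ 5 - 132 * π ^ 4 - 1184 * π ^ 3 + 1440 * π ^ 2 ≥ 10291 := by
    nlinarith
  have c1 : -24 * π ^ 6 - 16 * π ^ 5 + 408 * π ^ 4 - 480 * π ^ 3 ≥ -3110 := by nlinarith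
  have c0 : 11 * π ^ 6 - 52 * π ^ 5 + 60 * π ^ 4 ≥ 506 := by nlinarith
  have hQ := Q_pos x hx hx'
  nlinarith [mul_le_mul_of_nonneg_right c6 x6.le, mul_le_mul_of_nonneg_right c5 x5.le,
    mul_le_mul_of_nonneg_right c4 x4.le, mul_le_mul_of_nonneg_right c3 x3.le,
    mul_le_mul_of_nonneg_right c2 x2.le, mul_le_mul_of_nonneg_right c1 hx.le]
end

section
/- Define P(x) as the degree-6 polynomial with the coefficients from G₁'' (as in the proof of Nishizawa's open problem), and Q(x) = 5(π-2x)²((-2π+4)x² + (2π²-4π)x + π²)². Then P(x)·cos²x - Q(x)·sin²x > 0 for all x in (0, c₁), where c₁ = π/2 + ((π³-60(π-2))π³)/(240(π³-24(π-2))). -/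
set_option maxHeartbeats 1000000

open Real

theorem g2_pos (x : ℝ) (hx : 0 < x)
    (hx' : x < π / 2 + (π ^ 3 - 60 * (π - 2)) * π ^ 3 / (240 * (π ^ 3 - 24 * (π - 2)))) :
    ((-80 * π ^ 2 + 320 * π - 320) * x ^ 6 +
        (240 * π ^ 3 - 992 * π ^ 2 + 1088 * π - 128) * x ^ 5 +
        (-260 * π ^ 4 + 1216 * π ^ 3 - 1344 * π ^ 2 - 576 * π + 960) * x ^ 4 +
        (120 * π ^ 5 - 728 * π ^ 4 + 720 * π ^ 3 + 1472 * π ^ 2 - 1920 * π) * x ^ 3 +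
        (-20 * π ^ 6 + 212 * π ^ 5 - 132 * π ^ 4 - 1184 * π ^ 3 + 1440 * π ^ 2) * x ^ 2 +
        (-24 * π ^ 6 - 16 * π ^ 5 + 408 * π ^ 4 - 480 * π ^ 3) * x +
        11 * π ^ 6 - 52 * π ^ 5 + 60 * π ^ 4) * Real.cos x ^ 2 -
      5 * (π - 2 * x) ^ 2 * ((-2 * π + 4) * x ^ 2 + (2 * π ^ 2 - 4 * π) * x + π ^ 2) ^ 2 *
        Real.sin x ^ 2 > 0 := by
  have hpl := Real.pi_gt_d6
  have hpu := Real.pi_lt_d6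
  have sq1 := sq_nonneg (π - 3.141592)
  have sq2 := sq_nonneg (3.141593 - π)
  have h2l : (9.8696 : ℝ) < π ^ 2 := by linarith only [sq1, hpl]
  have m2u : (0:ℝ) ≤ (3.141593 - π) * (3.141593 + π) := mul_nonneg (by linarith only [hpu]) (by linarith only [hpl])
  have h2u : π ^ 2 < (9.869607 : ℝ) := by nlinarith [m2u]
  have m3l : (0:ℝ) ≤ (π ^ 2 - (12337/1250 : ℝ)) * (π - (392699/125000 : ℝ)) := mul_nonneg (by linarith only [h2l]) (by linarith only [hpl])
  have h3l : (1937891/62500 : ℝ) < π ^ 3 := by linarith only [m3l, h2l, hpl]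
  have m3u : (0:ℝ) ≤ ((9869607/1000000 : ℝ) - π ^ 2) * π := mul_nonneg (by linarith only [h2u]) (by linarith only [hpl])
  have h3u : π ^ 3 < (31006289/1000000 : ℝ) := by linarith only [m3u, h2u, hpu, h2l, hpl]
  have m4l : (0:ℝ) ≤ (π ^ 3 - (1937891/62500 : ℝ)) * (π - (392699/125000 : ℝ)) := mul_nonneg (by linarith only [h3l]) (by linarith only [hpl])
  have h4l : (19481801/200000 : ℝ) < π ^ 4 := by linarith only [m4l, h3l, hpl]
  have m4u : (0:ℝ) ≤ ((31006289/1000000 : ℝ) - π ^ 3) * π := mul_nonneg (by linarith only [h3u]) (by linarith only [hpl])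
  have h4u : π ^ 4 < (97409141/1000000 : ℝ) := by linarith only [m4u, h3u, hpu, h3l, hpl]
  have m5l : (0:ℝ) ≤ (π ^ 4 - (19481801/200000 : ℝ)) * (π - (392699/125000 : ℝ)) := mul_nonneg (by linarith only [h4l]) (by linarith only [hpl])
  have h5l : (6120387/20000 : ℝ) < π ^ 5 := by linarith only [m5l, h4l, hpl]
  have m5u : (0:ℝ) ≤ ((97409141/1000000 : ℝ) - π ^ 4) * π := mul_nonneg (by linarith only [h4u]) (by linarith only [hpl])
  have h5u : π ^ 5 < (76504969/250000 : ℝ) := by linarith only [m5u, h4u, hpu, h4l, hpl]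
  have m6l : (0:ℝ) ≤ (π ^ 5 - (6120387/20000 : ℝ)) * (π - (392699/125000 : ℝ)) := mul_nonneg (by linarith only [h5l]) (by linarith only [hpl])
  have h6l : (961387941/1000000 : ℝ) < π ^ 6 := by linarith only [m6l, h5l, hpl]
  have m6u : (0:ℝ) ≤ ((76504969/250000 : ℝ) - π ^ 5) * π := mul_nonneg (by linarith only [h5u]) (by linarith only [hpl])
  have h6u : π ^ 6 < (961389901/1000000 : ℝ) := by linarith only [m6u, h5u, hpu, h5l, hpl]
  have hx9 : x < 0.229 := by
    have hd : (0:ℝ) < 240 * (π ^ 3 - 24 * (π - 2)) := by linarith only [h3l, hpu]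
    have hnd : (π ^ 3 - 60 * (π - 2)) * π ^ 3 < (0.229 - π / 2) * (240 * (π ^ 3 - 24 * (π - 2))) := by
      nlinarith [h6u, h6l, h4u, h4l, h3u, h3l, h2l, h2u, hpl, hpu]
    have := (div_lt_iff₀ hd).mpr hnd
    linarith only [hx', this]
  have hb : (0:ℝ) ≤ 0.229 - x := by linarith only [hx9]
  have hcP0 : (0:ℝ) ≤ ((11 : ℝ) * π ^ 6 + (-52 : ℝ) * π ^ 5 + (60 : ℝ) * π ^ 4) - (126691/250 : ℝ) := by linarith only [hpl, hpu, h2l, h2u, h3l, h3u, h4l, h4u, h5l, h5u, h6l, h6u]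
  have hcP1 : (0:ℝ) ≤ ((-24 : ℝ) * π ^ 6 + (-16 : ℝ) * π ^ 5 + (408 : ℝ) * π ^ 4 + (-480 : ℝ) * π ^ 3) - (-3109831/1000 : ℝ) := by linarith only [hpl, hpu, h2l, h2u, h3l, h3u, h4l, h4u, h5l, h5u, h6l, h6u]
  have hcP2 : (0:ℝ) ≤ ((-20 : ℝ) * π ^ 6 + (212 : ℝ) * π ^ 5 + (-132 : ℝ) * π ^ 4 + (-1184 : ℝ) * π ^ 3 + (1440 : ℝ) * π ^ 2) - (2058213/200 : ℝ) := by linarith only [hpl, hpu, h2l, h2u, h3l, h3u, h4l, h4u, h5l, h5u, h6l, h6u]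
  have hcP3 : (0:ℝ) ≤ ((120 : ℝ) * π ^ 5 + (-728 : ℝ) * π ^ 4 + (720 : ℝ) * π ^ 3 + (1472 : ℝ) * π ^ 2 + (-1920 : ℝ) * π) - (-1685423/500 : ℝ) := by linarith only [hpl, hpu, h2l, h2u, h3l, h3u, h4l, h4u, h5l, h5u, h6l, h6u]
  have hcP4 : (0:ℝ) ≤ ((-260 : ℝ) * π ^ 4 + (1216 : ℝ) * π ^ 3 + (-1344 : ℝ) * π ^ 2 + (-576 : ℝ) * π + (960 : ℝ)) - (-1737089/1000 : ℝ) := by linarith only [hpl, hpu, h2l, h2u, h3l, h3u, h4l, h4u, h5l, h5u, h6l, h6u]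
  have hcP5 : (0:ℝ) ≤ ((240 : ℝ) * π ^ 3 + (-992 : ℝ) * π ^ 2 + (1088 : ℝ) * π + (-128 : ℝ)) - (940893/1000 : ℝ) := by linarith only [hpl, hpu, h2l, h2u, h3l, h3u, h4l, h4u, h5l, h5u, h6l, h6u]
  have hcP6 : (0:ℝ) ≤ ((-80 : ℝ) * π ^ 2 + (320 : ℝ) * π + (-320 : ℝ)) - (-10427/100 : ℝ) := by linarith only [hpl, hpu, h2l, h2u, h3l, h3u, h4l, h4u, h5l, h5u, h6l, h6u]
  have hcQ0 : (0:ℝ) ≤ (120174/25 : ℝ) - ((5 : ℝ) * π ^ 6) := by linarith only [hpl, hpu, h2l, h2u, h3l, h3u, h4l, h4u, h5l, h5u, h6l, h6u]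
  have hcQ1 : (0:ℝ) ≤ (108331/125 : ℝ) - ((20 : ℝ) * π ^ 6 + (-60 : ℝ) * π ^ 5) := by linarith only [hpl, hpu, h2l, h2u, h3l, h3u, h4l, h4u, h5l, h5u, h6l, h6u]
  have hcQ2 : (0:ℝ) ≤ (-1658233/250 : ℝ) - ((20 : ℝ) * π ^ 6 + (-180 : ℝ) * π ^ 5 + (300 : ℝ) * π ^ 4) := by linarith only [hpl, hpu, h2l, h2u, h3l, h3u, h4l, h4u, h5l, h5u, h6l, h6u]
  have hcQ3 : (0:ℝ) ≤ (407267/500 : ℝ) - ((-120 : ℝ) * π ^ 5 + (640 : ℝ) * π ^ 4 + (-800 : ℝ) * π ^ 3) := by linarith only [hpl, hpu, h2l, h2u, h3l, h3u, h4l, h4u, h5l, h5u, h6l, h6u]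
  have hcQ4 : (0:ℝ) ≤ (2442909/1000 : ℝ) - ((260 : ℝ) * π ^ 4 + (-1120 : ℝ) * π ^ 3 + (1200 : ℝ) * π ^ 2) := by linarith only [hpl, hpu, h2l, h2u, h3l, h3u, h4l, h4u, h5l, h5u, h6l, h6u]
  have hcQ5 : (0:ℝ) ≤ (-982597/1000 : ℝ) - ((-240 : ℝ) * π ^ 3 + (960 : ℝ) * π ^ 2 + (-960 : ℝ) * π) := by linarith only [hpl, hpu, h2l, h2u, h3l, h3u, h4l, h4u, h5l, h5u, h6l, h6u]
  have hcQ6 : (0:ℝ) ≤ (10427/100 : ℝ) - ((80 : ℝ) * π ^ 2 + (-320 : ℝ) * π + (320 : ℝ)) := by linarith only [hpl, hpu, h2l, h2u, h3l, h3u, h4l, h4u, h5l, h5u, h6l, h6u]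
  have hxp : ∀ n : ℕ, (0:ℝ) ≤ x ^ n := fun n => pow_nonneg hx.le n
  have tP1 : (0:ℝ) ≤ (((-24 : ℝ) * π ^ 6 + (-16 : ℝ) * π ^ 5 + (408 : ℝ) * π ^ 4 + (-480 : ℝ) * π ^ 3) - (-3109831/1000 : ℝ)) * x ^ 1 := mul_nonneg hcP1 (hxp 1)
  have tQ1 : (0:ℝ) ≤ ((108331/125 : ℝ) - ((20 : ℝ) * π ^ 6 + (-60 : ℝ) * π ^ 5)) * x ^ 1 := mul_nonneg hcQ1 (hxp 1)
  have tP2 : (0:ℝ) ≤ (((-20 : ℝ) * π ^ 6 + (212 : ℝ) * π ^ 5 + (-132 : ℝ) * π ^ 4 + (-1184 : ℝ) * π ^ 3 + (1440 : ℝ) * π ^ 2) - (2058213/200 : ℝ)) * x ^ 2 := mul_nonneg hcP2 (hxp 2)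
  have tQ2 : (0:ℝ) ≤ ((-1658233/250 : ℝ) - ((20 : ℝ) * π ^ 6 + (-180 : ℝ) * π ^ 5 + (300 : ℝ) * π ^ 4)) * x ^ 2 := mul_nonneg hcQ2 (hxp 2)
  have tP3 : (0:ℝ) ≤ (((120 : ℝ) * π ^ 5 + (-728 : ℝ) * π ^ 4 + (720 : ℝ) * π ^ 3 + (1472 : ℝ) * π ^ 2 + (-1920 : ℝ) * π) - (-1685423/500 : ℝ)) * x ^ 3 := mul_nonneg hcP3 (hxp 3)
  have tQ3 : (0:ℝ) ≤ ((407267/500 : ℝ) - ((-120 : ℝ) * π ^ 5 + (640 : ℝ) * π ^ 4 + (-800 : ℝ) * π ^ 3)) * x ^ 3 := mul_nonneg hcQ3 (hxp 3)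
  have tP4 : (0:ℝ) ≤ (((-260 : ℝ) * π ^ 4 + (1216 : ℝ) * π ^ 3 + (-1344 : ℝ) * π ^ 2 + (-576 : ℝ) * π + (960 : ℝ)) - (-1737089/1000 : ℝ)) * x ^ 4 := mul_nonneg hcP4 (hxp 4)
  have tQ4 : (0:ℝ) ≤ ((2442909/1000 : ℝ) - ((260 : ℝ) * π ^ 4 + (-1120 : ℝ) * π ^ 3 + (1200 : ℝ) * π ^ 2)) * x ^ 4 := mul_nonneg hcQ4 (hxp 4)
  have tP5 : (0:ℝ) ≤ (((240 : ℝ) * π ^ 3 + (-992 : ℝ) * π ^ 2 + (1088 : ℝ) * π + (-128 : ℝ)) - (940893/1000 : ℝ)) * x ^ 5 := mul_nonneg hcP5 (hxp 5)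
  have tQ5 : (0:ℝ) ≤ ((-982597/1000 : ℝ) - ((-240 : ℝ) * π ^ 3 + (960 : ℝ) * π ^ 2 + (-960 : ℝ) * π)) * x ^ 5 := mul_nonneg hcQ5 (hxp 5)
  have tP6 : (0:ℝ) ≤ (((-80 : ℝ) * π ^ 2 + (320 : ℝ) * π + (-320 : ℝ)) - (-10427/100 : ℝ)) * x ^ 6 := mul_nonneg hcP6 (hxp 6)
  have tQ6 : (0:ℝ) ≤ ((10427/100 : ℝ) - ((80 : ℝ) * π ^ 2 + (-320 : ℝ) * π + (320 : ℝ))) * x ^ 6 := mul_nonneg hcQ6 (hxp 6)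
  have hPlow : (126691/250 : ℝ) + (-3109831/1000 : ℝ) * x + (2058213/200 : ℝ) * x ^ 2 + (-1685423/500 : ℝ) * x ^ 3 + (-1737089/1000 : ℝ) * x ^ 4 + (940893/1000 : ℝ) * x ^ 5 + (-10427/100 : ℝ) * x ^ 6 ≤ ((-80 * π ^ 2 + 320 * π - 320) * x ^ 6 + (240 * π ^ 3 - 992 * π ^ 2 + 1088 * π - 128) * x ^ 5 + (-260 * π ^ 4 + 1216 * π ^ 3 - 1344 * π ^ 2 - 576 * π + 960) * x ^ 4 + (120 * π ^ 5 - 728 * π ^ 4 + 720 * π ^ 3 + 1472 * π ^ 2 - 1920 * π) * x ^ 3 + (-20 * π ^ 6 + 212 * π ^ 5 - 132 * π ^ 4 - 1184 * π ^ 3 + 1440 * π ^ 2) * x ^ 2 + (-24 * π ^ 6 - 16 * π ^ 5 + 408 * π ^ 4 - 480 * π ^ 3) * x + 11 * π ^ 6 - 52 * π ^ 5 + 60 * π ^ 4) := by linarith only [tP1, tP2, tP3, tP4, tP5, tP6, hcP0]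
  have hQup : (5 * (π - 2 * x) ^ 2 * ((-2 * π + 4) * x ^ 2 + (2 * π ^ 2 - 4 * π) * x + π ^ 2) ^ 2) ≤ (120174/25 : ℝ) + (108331/125 : ℝ) * x + (-1658233/250 : ℝ) * x ^ 2 + (407267/500 : ℝ) * x ^ 3 + (2442909/1000 : ℝ) * x ^ 4 + (-982597/1000 : ℝ) * x ^ 5 + (10427/100 : ℝ) * x ^ 6 := by linarith only [tQ1, tQ2, tQ3, tQ4, tQ5, tQ6, hcQ0]
  have u0 : (0:ℝ) ≤ x ^ 0 * (0.229 - x) ^ 10 := mul_nonneg (hxp 0) (pow_nonneg hb 10)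
  have u1 : (0:ℝ) ≤ x ^ 1 * (0.229 - x) ^ 9 := mul_nonneg (hxp 1) (pow_nonneg hb 9)
  have u2 : (0:ℝ) ≤ x ^ 2 * (0.229 - x) ^ 8 := mul_nonneg (hxp 2) (pow_nonneg hb 8)
  have u3 : (0:ℝ) ≤ x ^ 3 * (0.229 - x) ^ 7 := mul_nonneg (hxp 3) (pow_nonneg hb 7)
  have u4 : (0:ℝ) ≤ x ^ 4 * (0.229 - x) ^ 6 := mul_nonneg (hxp 4) (pow_nonneg hb 6)
  have u5 : (0:ℝ) ≤ x ^ 5 * (0.229 - x) ^ 5 := mul_nonneg (hxp 5) (pow_nonneg hb 5)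
  have u6 : (0:ℝ) ≤ x ^ 6 * (0.229 - x) ^ 4 := mul_nonneg (hxp 6) (pow_nonneg hb 4)
  have u7 : (0:ℝ) ≤ x ^ 7 * (0.229 - x) ^ 3 := mul_nonneg (hxp 7) (pow_nonneg hb 3)
  have u8 : (0:ℝ) ≤ x ^ 8 * (0.229 - x) ^ 2 := mul_nonneg (hxp 8) (pow_nonneg hb 2)
  have u9 : (0:ℝ) ≤ x ^ 9 * (0.229 - x) ^ 1 := mul_nonneg (hxp 9) (pow_nonneg hb 1)
  have u10 : (0:ℝ) ≤ x ^ 10 * (0.229 - x) ^ 0 := mul_nonneg (hxp 10) (pow_nonneg hb 0)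
  have v0 : (0:ℝ) ≤ x ^ 0 * (0.229 - x) ^ 6 := mul_nonneg (hxp 0) (pow_nonneg hb 6)
  have v1 : (0:ℝ) ≤ x ^ 1 * (0.229 - x) ^ 5 := mul_nonneg (hxp 1) (pow_nonneg hb 5)
  have v2 : (0:ℝ) ≤ x ^ 2 * (0.229 - x) ^ 4 := mul_nonneg (hxp 2) (pow_nonneg hb 4)
  have v3 : (0:ℝ) ≤ x ^ 3 * (0.229 - x) ^ 3 := mul_nonneg (hxp 3) (pow_nonneg hb 3)
  have v4 : (0:ℝ) ≤ x ^ 4 * (0.229 - x) ^ 2 := mul_nonneg (hxp 4) (pow_nonneg hb 2)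
  have v5 : (0:ℝ) ≤ x ^ 5 * (0.229 - x) ^ 1 := mul_nonneg (hxp 5) (pow_nonneg hb 1)
  have v6 : (0:ℝ) ≤ x ^ 6 * (0.229 - x) ^ 0 := mul_nonneg (hxp 6) (pow_nonneg hb 0)
  have hPLpos : (0:ℝ) < (126691/250 : ℝ) + (-3109831/1000 : ℝ) * x + (2058213/200 : ℝ) * x ^ 2 + (-1685423/500 : ℝ) * x ^ 3 + (-1737089/1000 : ℝ) * x ^ 4 + (940893/1000 : ℝ) * x ^ 5 + (-10427/100 : ℝ) * x ^ 6 := by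
    linarith only [v0, v1, v2, v3, v4, v5, v6]
  have hF : (0:ℝ) < ((126691/250 : ℝ) + (-3109831/1000 : ℝ) * x + (2058213/200 : ℝ) * x ^ 2 + (-1685423/500 : ℝ) * x ^ 3 + (-1737089/1000 : ℝ) * x ^ 4 + (940893/1000 : ℝ) * x ^ 5 + (-10427/100 : ℝ) * x ^ 6) * (1 - x ^ 2 / 2) ^ 2 - ((120174/25 : ℝ) + (108331/125 : ℝ) * x + (-1658233/250 : ℝ) * x ^ 2 + (407267/500 : ℝ) * x ^ 3 + (2442909/1000 : ℝ) * x ^ 4 + (-982597/1000 : ℝ) * x ^ 5 + (10427/100 : ℝ) * x ^ 6) * x ^ 2 := by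
    linarith only [u0, u1, u2, u3, u4, u5, u6, u7, u8, u9, u10]
  have hww : (0:ℝ) ≤ (0.229 - x) * (0.229 + x) := mul_nonneg hb (by linarith only [hx])
  have hw : (0:ℝ) ≤ 1 - x ^ 2 / 2 := by linarith only [hww]
  have hcos : 1 - x ^ 2 / 2 ≤ Real.cos x := Real.one_sub_sq_div_two_le_cos
  have mcos : (0:ℝ) ≤ (Real.cos x - (1 - x ^ 2 / 2)) * (Real.cos x + (1 - x ^ 2 / 2)) := mul_nonneg (by linarith only [hcos]) (by linarith only [hcos, hw])
  have hcos2 : (1 - x ^ 2 / 2) ^ 2 ≤ Real.cos x ^ 2 := by linarith only [mcos]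
  have hsin : Real.sin x < x := Real.sin_lt hx
  have hsinpos : 0 < Real.sin x := Real.sin_pos_of_pos_of_lt_pi hx (by linarith only [hx9, hpl])
  have msin : (0:ℝ) ≤ (x - Real.sin x) * (x + Real.sin x) := mul_nonneg (by linarith only [hsin]) (by linarith only [hx, hsinpos])
  have hsin2 : Real.sin x ^ 2 ≤ x ^ 2 := by linarith only [msin]
  have hQ0 : (0:ℝ) ≤ (5 * (π - 2 * x) ^ 2 * ((-2 * π + 4) * x ^ 2 + (2 * π ^ 2 - 4 * π) * x + π ^ 2) ^ 2) := by positivity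
  have hQU0 : (0:ℝ) ≤ (120174/25 : ℝ) + (108331/125 : ℝ) * x + (-1658233/250 : ℝ) * x ^ 2 + (407267/500 : ℝ) * x ^ 3 + (2442909/1000 : ℝ) * x ^ 4 + (-982597/1000 : ℝ) * x ^ 5 + (10427/100 : ℝ) * x ^ 6 := le_trans hQ0 hQup
  have f1 : (0:ℝ) ≤ (((-80 * π ^ 2 + 320 * π - 320) * x ^ 6 + (240 * π ^ 3 - 992 * π ^ 2 + 1088 * π - 128) * x ^ 5 + (-260 * π ^ 4 + 1216 * π ^ 3 - 1344 * π ^ 2 - 576 * π + 960) * x ^ 4 + (120 * π ^ 5 - 728 * π ^ 4 + 720 * π ^ 3 + 1472 * π ^ 2 - 1920 * π) * x ^ 3 + (-20 * π ^ 6 + 212 * π ^ 5 - 132 * π ^ 4 - 1184 * π ^ 3 + 1440 * π ^ 2) * x ^ 2 + (-24 * π ^ 6 - 16 * π ^ 5 + 408 * π ^ 4 - 480 * π ^ 3) * x + 11 * π ^ 6 - 52 * π ^ 5 + 60 * π ^ 4) - ((126691/250 : ℝ) + (-3109831/1000 : ℝ) * x + (2058213/200 : ℝ) * x ^ 2 +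 (-1685423/500 : ℝ) * x ^ 3 + (-1737089/1000 : ℝ) * x ^ 4 + (940893/1000 : ℝ) * x ^ 5 + (-10427/100 : ℝ) * x ^ 6)) * Real.cos x ^ 2 := mul_nonneg (by linarith only [hPlow]) (sq_nonneg _)
  have f2 : (0:ℝ) ≤ ((126691/250 : ℝ) + (-3109831/1000 : ℝ) * x + (2058213/200 : ℝ) * x ^ 2 + (-1685423/500 : ℝ) * x ^ 3 + (-1737089/1000 : ℝ) * x ^ 4 + (940893/1000 : ℝ) * x ^ 5 + (-10427/100 : ℝ) * x ^ 6) * (Real.cos x ^ 2 - (1 - x ^ 2 / 2) ^ 2) := mul_nonneg hPLpos.le (by linarith only [hcos2])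
  have f3 : (0:ℝ) ≤ (((120174/25 : ℝ) + (108331/125 : ℝ) * x + (-1658233/250 : ℝ) * x ^ 2 + (407267/500 : ℝ) * x ^ 3 + (2442909/1000 : ℝ) * x ^ 4 + (-982597/1000 : ℝ) * x ^ 5 + (10427/100 : ℝ) * x ^ 6) - (5 * (π - 2 * x) ^ 2 * ((-2 * π + 4) * x ^ 2 + (2 * π ^ 2 - 4 * π) * x + π ^ 2) ^ 2)) * Real.sin x ^ 2 := mul_nonneg (by linarith only [hQup]) (sq_nonneg _)
  have f4 : (0:ℝ) ≤ ((120174/25 : ℝ) + (108331/125 : ℝ) * x + (-1658233/250 : ℝ) * x ^ 2 + (407267/500 : ℝ) * x ^ 3 + (2442909/1000 : ℝ) * x ^ 4 + (-982597/1000 : ℝ) * x ^ 5 + (10427/100 : ℝ) * x ^ 6) * (x ^ 2 - Real.sin x ^ 2) := mul_nonneg hQU0 (by linarith only [hsin2])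
  linarith only [f1, f2, f3, f4, hF]
end

section
/- For all x in (0, c₁), the function G₁(x) = ln(cos x) - ln(π/2 - x) - (x/5 + 1)·ln(2/π + ((π-2)/π³)(π² - 4(π/2 - x)²)) is positive, where c₁ = π/2 + ((π³-60(π-2))π³)/(240(π³-24(π-2))). -/
open Real

set_option maxHeartbeats 2000000

private lemma auxN (x a1 a2 a3 a4 a5 : ℝ) (hx : 0 < x) (hx2 : x < 0.2285)
    (h1 : (0.0048:ℝ) ≤ a1) (h2 : (1.508:ℝ) ≤ a2) (h3 : (-4.5318:ℝ) ≤ a3)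
    (h4 : (2.25:ℝ) ≤ a4) (h5 : (-0.7173:ℝ) ≤ a5) :
    0 < a1 * x + a2 * x ^ 2 + a3 * x ^ 3 + a4 * x ^ 4 + a5 * x ^ 5 := by
  have hx0 : (0:ℝ) ≤ x := hx.le
  nlinarith [mul_nonneg (sub_nonneg.2 h1) hx0,
    mul_nonneg (sub_nonneg.2 h2) (mul_nonneg hx0 hx0),
    mul_nonneg (sub_nonneg.2 h3) (mul_nonneg (mul_nonneg hx0 hx0) hx0),
    mul_nonneg (sub_nonneg.2 h4) (mul_nonneg (mul_nonneg (mul_nonneg hx0 hx0) hx0) hx0),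
    mul_nonneg (sub_nonneg.2 h5)
      (mul_nonneg (mul_nonneg (mul_nonneg (mul_nonneg hx0 hx0) hx0) hx0) hx0),
    mul_pos hx hx,
    mul_nonneg (mul_nonneg hx0 hx0) (by linarith : (0:ℝ) ≤ 0.2285 - x),
    mul_nonneg (mul_nonneg (mul_nonneg (mul_nonneg hx0 hx0) hx0) hx0)
      (by linarith : (0:ℝ) ≤ 0.2285 - x),
    mul_nonneg (mul_nonneg (mul_nonneg hx0 hx0) hx0) hx0]

theorem G1_pos (x : ℝ) (hx : 0 < x)
    (hx' : x < π / 2 + (π ^ 3 - 60 * (π - 2)) * π ^ 3 / (240 * (π ^ 3 - 24 * (π - 2)))) :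
    Real.log (Real.cos x) - Real.log (π / 2 - x) -
      (x / 5 + 1) *
        Real.log (2 / π + (π - 2) / π ^ 3 * (π ^ 2 - 4 * (π / 2 - x) ^ 2)) > 0 := by
  have hπl : 3.141592 < π := pi_gt_d6
  have hπu : π < 3.141593 := pi_lt_d6
  have hπ0 : (0:ℝ) < π := by linarith
  have hp2l : (9.8696002:ℝ) < π ^ 2 := by nlinarith
  have hp2u : π ^ 2 < 9.8696066 := by nlinarith
  have hp3l : (31.0062573:ℝ) < π ^ 3 := by nlinarith
  have hp3u : π ^ 3 < 31.006287 := by nlinarith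
  -- x < 0.2285
  have hD : (0:ℝ) < 240 * (π ^ 3 - 24 * (π - 2)) := by nlinarith
  have hc1 : (π ^ 3 - 60 * (π - 2)) * π ^ 3 / (240 * (π ^ 3 - 24 * (π - 2)))
      < 0.2285 - π / 2 := by
    rw [div_lt_iff₀ hD]
    nlinarith [sq_nonneg (π ^ 3 - 31.0062573)]
  have hx2 : x < 0.2285 := by linarith
  have ht : 0 < π / 2 - x := by linarith
  have hcos : 0 < Real.cos x := Real.cos_pos_of_mem_Ioo ⟨by linarith, by linarith⟩
  have hcl : 1 - x ^ 2 / 2 ≤ Real.cos x := Real.one_sub_sq_div_two_le_cos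
  have hclpos : (0:ℝ) < 1 - x ^ 2 / 2 := by nlinarith
  -- rewrite u
  have hu4 : 2 / π + (π - 2) / π ^ 3 * (π ^ 2 - 4 * (π / 2 - x) ^ 2)
      = 2 / π + 4 * (π - 2) * x * (π - x) / π ^ 3 := by
    field_simp
    ring
  rw [hu4]
  have hπ2 : (0:ℝ) < π - 2 := by linarith
  have hπx : (0:ℝ) < π - x := by linarith
  have hupos : (0:ℝ) < 2 / π + 4 * (π - 2) * x * (π - x) / π ^ 3 := by positivity
  -- lower bound on log (π/2)
  have hb : (1141592:ℝ) / 3141592 ≤ (π - 2) / π := by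
    rw [le_div_iff₀ hπ0]
    nlinarith
  have hB : (π - 2) / π ≤ (1141593:ℝ) / 3141593 := by
    rw [div_le_iff₀ hπ0]
    nlinarith
  have hy0 : (0:ℝ) ≤ (π - 2) / π := by
    apply le_trans _ hb
    norm_num
  have hylt : |(π - 2) / π| < 1 := by
    rw [abs_of_nonneg hy0, div_lt_one hπ0]
    linarith
  have hmain := Real.abs_log_sub_add_sum_range_le hylt 10
  rw [abs_le] at hmain
  have h1y : 1 - (π - 2) / π = 2 / π := by
    field_simp
    ring
  have hlog2 : Real.log (2 / π) = -Real.log (π / 2) := by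
    rw [← Real.log_inv]
    congr 1
    rw [inv_div]
  have hSeval : (0.45158:ℝ) ≤ ∑ i ∈ Finset.range 10, ((1141592:ℝ)/3141592) ^ (i+1) / (i+1) := by
    norm_num [Finset.sum_range_succ]
  have hSle : (∑ i ∈ Finset.range 10, ((1141592:ℝ)/3141592) ^ (i+1) / (i+1))
      ≤ ∑ i ∈ Finset.range 10, ((π - 2) / π) ^ (i+1) / (i+1) := by
    apply Finset.sum_le_sum
    intro i _
    gcongr
  have herr : |(π - 2) / π| ^ 11 / (1 - |(π - 2) / π|) ≤ 0.000023 := by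
    rw [abs_of_nonneg hy0]
    have h1 : ((π - 2) / π) ^ 11 ≤ ((1141593:ℝ)/3141593) ^ 11 :=
      pow_le_pow_left₀ hy0 hB 11
    have h2 : (1:ℝ) - (1141593:ℝ)/3141593 ≤ 1 - (π - 2) / π := by linarith
    have h3 : (0:ℝ) < 1 - (1141593:ℝ)/3141593 := by norm_num
    calc ((π - 2) / π) ^ 11 / (1 - (π - 2) / π)
        ≤ ((1141593:ℝ)/3141593) ^ 11 / (1 - (1141593:ℝ)/3141593) := by
          gcongr
      _ ≤ 0.000023 := by norm_num
  have hlogpi2 : (0.4515:ℝ) < Real.log (π / 2) := by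
    have h1 := hmain.2
    norm_num only at h1
    rw [h1y, hlog2] at h1
    linarith [hSle, hSeval, herr]
  clear hmain hSeval hSle herr h1y hlog2 hb hB hylt hy0 hc1 hx'
  -- tangent line bound : -log u ≥ 0.4515 - 2(π-2)x(π-x)/π²
  have hu12 : (0:ℝ) < (2 / π + 4 * (π - 2) * x * (π - x) / π ^ 3) * (π / 2) := by positivity
  have hlogmul : Real.log ((2 / π + 4 * (π - 2) * x * (π - x) / π ^ 3) * (π / 2))
      = Real.log (2 / π + 4 * (π - 2) * x * (π - x) / π ^ 3) + Real.log (π / 2) :=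
    Real.log_mul (ne_of_gt hupos) (by positivity)
  have htang := Real.log_le_sub_one_of_pos hu12
  have hid : (2 / π + 4 * (π - 2) * x * (π - x) / π ^ 3) * (π / 2) - 1
      = 2 * (π - 2) * x * (π - x) / π ^ 2 := by
    field_simp
    ring
  have hLt : 0.4515 - 2 * (π - 2) * x * (π - x) / π ^ 2
      ≤ -Real.log (2 / π + 4 * (π - 2) * x * (π - x) / π ^ 3) := by
    rw [hlogmul] at htang
    rw [hid] at htang
    linarith
  -- Lt nonneg
  have hxpx : x * (π - x) ≤ 0.72 := by nlinarith
  have hLt0 : (0:ℝ) ≤ 0.4515 - 2 * (π - 2) * x * (π - x) / π ^ 2 := by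
    rw [sub_nonneg, div_le_iff₀ (by positivity : (0:ℝ) < π ^ 2)]
    nlinarith [mul_nonneg hπ2.le (sub_nonneg.2 hxpx)]
  -- key polynomial inequality
  have hpoly : π ^ 3 * ((x / 5 * (0.4515 - 2 * (π - 2) * x * (π - x) / π ^ 2)) * (1 - x ^ 2 / 2)
        + (1 - x ^ 2 / 2) - (π / 2 - x) * (2 / π + 4 * (π - 2) * x * (π - x) / π ^ 3))
      = (6 * π ^ 2 - 1.9097 * π ^ 3) * x + (-12 * π + 6.8 * π ^ 2 - 0.9 * π ^ 3) * x ^ 2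
        + (8 - 4.8 * π + 0.4 * π ^ 2 - 0.04515 * π ^ 3) * x ^ 3
        + (-0.4 * π ^ 2 + 0.2 * π ^ 3) * x ^ 4 + (0.4 * π - 0.2 * π ^ 2) * x ^ 5 := by
    field_simp
    ring
  have hr1 : (0.0048:ℝ) ≤ 6 * π ^ 2 - 1.9097 * π ^ 3 := by linarith
  have hr2 : (1.508:ℝ) ≤ -12 * π + 6.8 * π ^ 2 - 0.9 * π ^ 3 := by linarith
  have hr3 : (-4.5318:ℝ) ≤ 8 - 4.8 * π + 0.4 * π ^ 2 - 0.04515 * π ^ 3 := by linarith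
  have hr4 : (2.25:ℝ) ≤ -0.4 * π ^ 2 + 0.2 * π ^ 3 := by linarith
  have hr5 : (-0.7173:ℝ) ≤ 0.4 * π - 0.2 * π ^ 2 := by linarith
  have hN : (0:ℝ) < (6 * π ^ 2 - 1.9097 * π ^ 3) * x + (-12 * π + 6.8 * π ^ 2 - 0.9 * π ^ 3) * x ^ 2
        + (8 - 4.8 * π + 0.4 * π ^ 2 - 0.04515 * π ^ 3) * x ^ 3
        + (-0.4 * π ^ 2 + 0.2 * π ^ 3) * x ^ 4 + (0.4 * π - 0.2 * π ^ 2) * x ^ 5 :=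
    auxN x _ _ _ _ _ hx hx2 hr1 hr2 hr3 hr4 hr5
  have hkey : (0:ℝ) < (x / 5 * (0.4515 - 2 * (π - 2) * x * (π - x) / π ^ 2)) * (1 - x ^ 2 / 2)
        + (1 - x ^ 2 / 2) - (π / 2 - x) * (2 / π + 4 * (π - 2) * x * (π - x) / π ^ 3) := by
    nlinarith [hpoly, hN, hp3l]
  -- combine
  have hquot : (0:ℝ) < (π / 2 - x) * (2 / π + 4 * (π - 2) * x * (π - x) / π ^ 3) / Real.cos x :=
    div_pos (mul_pos ht hupos) hcos
  have hlogdiv : Real.log ((π / 2 - x) * (2 / π + 4 * (π - 2) * x * (π - x) / π ^ 3) / Real.cos x)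
      = Real.log (π / 2 - x) + Real.log (2 / π + 4 * (π - 2) * x * (π - x) / π ^ 3)
        - Real.log (Real.cos x) := by
    rw [Real.log_div (by positivity) (ne_of_gt hcos), Real.log_mul (ne_of_gt ht) (ne_of_gt hupos)]
  have h7 := Real.log_le_sub_one_of_pos hquot
  have h8 : (π / 2 - x) * (2 / π + 4 * (π - 2) * x * (π - x) / π ^ 3) / Real.cos x - 1
      = ((π / 2 - x) * (2 / π + 4 * (π - 2) * x * (π - x) / π ^ 3) - Real.cos x) / Real.cos x := by
    field_simp
  have h9 : ((π / 2 - x) * (2 / π + 4 * (π - 2) * x * (π - x) / π ^ 3) - Real.cos x) / Real.cos x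
      < x / 5 * (0.4515 - 2 * (π - 2) * x * (π - x) / π ^ 2) := by
    rw [div_lt_iff₀ hcos]
    nlinarith [hkey, hcl,
      mul_nonneg (mul_nonneg (by linarith : (0:ℝ) ≤ x / 5) hLt0) (sub_nonneg.2 hcl)]
  have h13 : x / 5 * (0.4515 - 2 * (π - 2) * x * (π - x) / π ^ 2)
      ≤ x / 5 * (-Real.log (2 / π + 4 * (π - 2) * x * (π - x) / π ^ 3)) :=
    mul_le_mul_of_nonneg_left hLt (by positivity)
  nlinarith [h7, h8, h9, h13, hlogdiv]
end
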